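/- Let n ≥ 2, h > 0, z ∈ ℂⁿ, and ω a unit vector in ℝⁿ. Then the Radon transform of the Gaussian y ↦ exp(-π(z-y)²/h) over the hyperplane {x : x·ω = t} equals h^{(n-1)/2} · exp(-π(z·ω - t)²/h), where (z-y)² denotes the bilinear (non-conjugated) square Σⱼ(zⱼ - yⱼ)². -/

import Mathlib

open MeasureTheory

section aux
open Complex
open scoped RealInnerProductSpace

private lemma real_parseval' {n d : ℕ} {ω : EuclideanSpace ℝ (Fin n)} (hω : ‖ω‖ = 1)
    (b : OrthonormalBasis (Fin d) ℝ ((ℝ ∙ ω)ᗮ : Submodule ℝ (EuclideanSpace ℝ (Fin n))))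
    (u v : EuclideanSpace ℝ (Fin n)) :
    ⟪u, v⟫ = ⟪u, ω⟫ * ⟪v, ω⟫ +
      ∑ i, ⟪u, (b i : EuclideanSpace ℝ (Fin n))⟫ * ⟪v, (b i : EuclideanSpace ℝ (Fin n))⟫ := by
  have hωE : ∀ e : ((ℝ ∙ ω)ᗮ : Submodule ℝ (EuclideanSpace ℝ (Fin n))),
      ⟪ω, (e : EuclideanSpace ℝ (Fin n))⟫ = 0 := fun e =>
    e.2 ω (Submodule.mem_span_singleton_self ω)
  have hdecomp : ∀ w : EuclideanSpace ℝ (Fin n),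
      ⟪ω, w⟫ • ω + ((Submodule.orthogonalProjection (ℝ ∙ ω)ᗮ w :) : EuclideanSpace ℝ (Fin n)) = w := by
    intro w
    have := Submodule.starProjection_add_starProjection_orthogonal (K := ℝ ∙ ω) w
    rw [Submodule.starProjection_unit_singleton ℝ hω w] at this
    exact this
  have hin : ∀ (w : EuclideanSpace ℝ (Fin n))
      (e : ((ℝ ∙ ω)ᗮ : Submodule ℝ (EuclideanSpace ℝ (Fin n)))),
      ⟪w, (e : EuclideanSpace ℝ (Fin n))⟫ = ⟪Submodule.orthogonalProjection (ℝ ∙ ω)ᗮ w, e⟫ := by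
    intro w e
    conv_lhs => rw [← hdecomp w]
    rw [inner_add_left, real_inner_smul_left, hωE e, mul_zero, zero_add]
    rfl
  have step : ⟪u, v⟫ = ⟪ω, v⟫ * ⟪u, ω⟫ +
      ⟪Submodule.orthogonalProjection (ℝ ∙ ω)ᗮ u, Submodule.orthogonalProjection (ℝ ∙ ω)ᗮ v⟫ := by
    conv_lhs => rw [← hdecomp v]
    rw [inner_add_right, real_inner_smul_right, hin u (Submodule.orthogonalProjection (ℝ ∙ ω)ᗮ v)]
  rw [step, ← b.sum_inner_mul_inner (Submodule.orthogonalProjection (ℝ ∙ ω)ᗮ u)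
    (Submodule.orthogonalProjection (ℝ ∙ ω)ᗮ v)]
  congr 1
  · rw [real_inner_comm ω v]; ring
  · refine Finset.sum_congr rfl fun i _ => ?_
    rw [← hin u (b i), real_inner_comm (Submodule.orthogonalProjection (ℝ ∙ ω)ᗮ v) (b i), ← hin v (b i)]

private lemma sum_mul_coord' {n : ℕ} (z : Fin n → ℂ) (a m : EuclideanSpace ℝ (Fin n))
    (ha : ∀ j, a j = (z j).re) (hm : ∀ j, m j = (z j).im) (u : EuclideanSpace ℝ (Fin n)) :
    ∑ j, z j * (u j : ℂ) = ((⟪a, u⟫ : ℝ) : ℂ) + ((⟪m, u⟫ : ℝ) : ℂ) * I := by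
  simp only [PiLp.inner_apply, RCLike.inner_apply, conj_trivial]
  push_cast
  rw [Finset.sum_mul, ← Finset.sum_add_distrib]
  refine Finset.sum_congr rfl fun j _ => ?_
  rw [← Complex.re_add_im (z j), ha, hm]
  push_cast
  ring

private lemma sum_sq_coord' {n : ℕ} (z : Fin n → ℂ) (a m : EuclideanSpace ℝ (Fin n))
    (ha : ∀ j, a j = (z j).re) (hm : ∀ j, m j = (z j).im) :
    ∑ j, (z j) ^ 2 = ((⟪a, a⟫ : ℝ) : ℂ) - ((⟪m, m⟫ : ℝ) : ℂ) +
      2 * ((⟪a, m⟫ : ℝ) : ℂ) * I := by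
  simp only [PiLp.inner_apply, RCLike.inner_apply, conj_trivial]
  push_cast
  simp only [Finset.mul_sum, Finset.sum_mul, ← Finset.sum_sub_distrib, ← Finset.sum_add_distrib]
  refine Finset.sum_congr rfl fun j _ => ?_
  rw [← Complex.re_add_im (z j), ha, hm]
  push_cast
  linear_combination ((z j).im : ℂ) ^ 2 * Complex.I_sq

private lemma complex_parseval' {n d : ℕ} {ω : EuclideanSpace ℝ (Fin n)} (hω : ‖ω‖ = 1)
    (b : OrthonormalBasis (Fin d) ℝ ((ℝ ∙ ω)ᗮ : Submodule ℝ (EuclideanSpace ℝ (Fin n))))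
    (z : Fin n → ℂ) :
    ∑ j, (z j) ^ 2 = (∑ j, z j * ((ω j : ℝ) : ℂ)) ^ 2 +
      ∑ i, (∑ j, z j * (((b i : EuclideanSpace ℝ (Fin n)) j : ℝ) : ℂ)) ^ 2 := by
  obtain ⟨a, ha⟩ : ∃ a : EuclideanSpace ℝ (Fin n), ∀ j, a j = (z j).re :=
    ⟨WithLp.toLp 2 (fun j => (z j).re : Fin n → ℝ), fun j => rfl⟩
  obtain ⟨m, hm⟩ : ∃ m : EuclideanSpace ℝ (Fin n), ∀ j, m j = (z j).im :=
    ⟨WithLp.toLp 2 (fun j => (z j).im : Fin n → ℝ), fun j => rfl⟩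
  rw [sum_sq_coord' z a m ha hm, sum_mul_coord' z a m ha hm ω]
  simp_rw [sum_mul_coord' z a m ha hm]
  have hsq : ∀ A M : ℝ, ((A : ℂ) + (M : ℂ) * I) ^ 2
      = (A : ℂ) * A - (M : ℂ) * M + 2 * ((A : ℂ) * M) * I := by
    intro A M
    linear_combination (M : ℂ) ^ 2 * Complex.I_sq
  simp_rw [hsq]
  rw [Finset.sum_add_distrib, Finset.sum_sub_distrib, ← Finset.sum_mul, ← Finset.mul_sum]
  have haa := real_parseval' hω b a a
  have hmm := real_parseval' hω b m m
  have ham := real_parseval' hω b a m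
  have haa' : ((⟪a, a⟫ : ℝ) : ℂ) = (⟪a, ω⟫ : ℝ) * (⟪a, ω⟫ : ℝ) +
      ∑ i, ((⟪a, (b i : EuclideanSpace ℝ (Fin n))⟫ : ℝ) : ℂ) *
        ((⟪a, (b i : EuclideanSpace ℝ (Fin n))⟫ : ℝ) : ℂ) := by
    exact_mod_cast congrArg (Complex.ofReal) haa
  have hmm' : ((⟪m, m⟫ : ℝ) : ℂ) = (⟪m, ω⟫ : ℝ) * (⟪m, ω⟫ : ℝ) +
      ∑ i, ((⟪m, (b i : EuclideanSpace ℝ (Fin n))⟫ : ℝ) : ℂ) *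
        ((⟪m, (b i : EuclideanSpace ℝ (Fin n))⟫ : ℝ) : ℂ) := by
    exact_mod_cast congrArg (Complex.ofReal) hmm
  have ham' : ((⟪a, m⟫ : ℝ) : ℂ) = (⟪a, ω⟫ : ℝ) * (⟪m, ω⟫ : ℝ) +
      ∑ i, ((⟪a, (b i : EuclideanSpace ℝ (Fin n))⟫ : ℝ) : ℂ) *
        ((⟪m, (b i : EuclideanSpace ℝ (Fin n))⟫ : ℝ) : ℂ) := by
    exact_mod_cast congrArg (Complex.ofReal) ham
  linear_combination haa' - hmm' + 2 * I * ham'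

end aux

theorem radon_of_gaussian (n : ℕ) (hn : 2 ≤ n) (h : ℝ) (hh : 0 < h)
    (z : Fin n → ℂ) (ω : EuclideanSpace ℝ (Fin n)) (hω : ‖ω‖ = 1) (t : ℝ) :
    ∫ y : ↥((ℝ ∙ ω)ᗮ),
        Complex.exp (-Real.pi *
          (∑ j, (z j - ((t • ω + (y : EuclideanSpace ℝ (Fin n))) j : ℝ)) ^ 2) / h)
      = ((h ^ (((n : ℝ) - 1) / 2) : ℝ) : ℂ) *
          Complex.exp (-Real.pi * ((∑ j, z j * ((ω j : ℝ) : ℂ)) - t) ^ 2 / h) := by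
  classical
  open Complex in
  open scoped RealInnerProductSpace in
  have hω0 : ω ≠ 0 := by
    intro hc; rw [hc, norm_zero] at hω; exact one_ne_zero hω.symm
  set d : ℕ := Module.finrank ℝ ↥((ℝ ∙ ω)ᗮ) with hd
  have hdn : d = n - 1 := by
    have h1 := Submodule.finrank_add_finrank_orthogonal (ℝ ∙ ω)
    rw [finrank_span_singleton hω0, finrank_euclideanSpace_fin] at h1
    omega
  set b : OrthonormalBasis (Fin d) ℝ ↥((ℝ ∙ ω)ᗮ) := stdOrthonormalBasis ℝ _ with hb
  set Z : ℂ := ∑ j, z j * ((ω j : ℝ) : ℂ) with hZ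
  set c : Fin d → ℂ := fun i =>
    ∑ j, z j * (((b i : EuclideanSpace ℝ (Fin n)) j : ℝ) : ℂ) with hc
  have key : ∀ y : ↥((ℝ ∙ ω)ᗮ),
      (∑ j, ((z j : ℂ) - (((t • ω + (y : EuclideanSpace ℝ (Fin n))) j : ℝ) : ℂ)) ^ 2)
        = (Z - t) ^ 2 + ∑ i, (c i - ((b.repr y i : ℝ) : ℂ)) ^ 2 := by
    intro y
    set x : EuclideanSpace ℝ (Fin n) := t • ω + (y : EuclideanSpace ℝ (Fin n)) with hx
    have hiprod : ∀ u : EuclideanSpace ℝ (Fin n),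
        ∑ j, ((z j : ℂ) - ((x j : ℝ) : ℂ)) * ((u j : ℝ) : ℂ)
          = (∑ j, z j * ((u j : ℝ) : ℂ)) - ((⟪x, u⟫ : ℝ) : ℂ) := by
      intro u
      rw [PiLp.inner_apply]
      simp only [RCLike.inner_apply, conj_trivial]
      push_cast
      rw [← Finset.sum_sub_distrib]
      exact Finset.sum_congr rfl fun j _ => by ring
    have hxω : ⟪x, ω⟫ = t := by
      rw [hx, inner_add_left, real_inner_smul_left, real_inner_self_eq_norm_sq, hω]
      have : ⟪(y : EuclideanSpace ℝ (Fin n)), ω⟫ = 0 := by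
        rw [real_inner_comm]
        exact y.2 ω (Submodule.mem_span_singleton_self ω)
      rw [this]; ring
    have hxb : ∀ i, ⟪x, (b i : EuclideanSpace ℝ (Fin n))⟫ = b.repr y i := by
      intro i
      rw [hx, inner_add_left, real_inner_smul_left]
      have h1 : ⟪ω, (b i : EuclideanSpace ℝ (Fin n))⟫ = 0 :=
        (b i).2 ω (Submodule.mem_span_singleton_self ω)
      have h2 : ⟪(y : EuclideanSpace ℝ (Fin n)), (b i : EuclideanSpace ℝ (Fin n))⟫
          = b.repr y i := by
        rw [b.repr_apply_apply, real_inner_comm]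
        rfl
      rw [h1, h2]; ring
    have := complex_parseval' hω b (fun j => (z j : ℂ) - ((x j : ℝ) : ℂ))
    simp only [hiprod, hxω, hxb] at this
    rw [this]
  -- the Gaussian integral part
  set B : ℂ := ((Real.pi / h : ℝ) : ℂ) with hB
  have hB0 : 0 < B.re := by
    rw [hB, Complex.ofReal_re]; positivity
  have hBne : B ≠ 0 := by
    intro hc; rw [hc] at hB0; simp at hB0
  have hh0 : (h : ℂ) ≠ 0 := Complex.ofReal_ne_zero.mpr hh.ne'
  have hdiv : ∀ w : ℂ, -Real.pi * w / h = -B * w := by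
    intro w; rw [hB]; push_cast; field_simp
  set C0 : ℂ := -B * (Z - t) ^ 2 - B * ∑ i, c i ^ 2 with hC0
  have scalar : ∀ Y : Fin d → ℝ,
      -Real.pi * ((Z - t) ^ 2 + ∑ i, (c i - (Y i : ℂ)) ^ 2) / h
        = C0 + (-B * ∑ i, ((Y i : ℝ) : ℂ) ^ 2 + ∑ i, (2 * B * c i) * (Y i : ℂ)) := by
    intro Y
    have hsplit : ∑ i, (c i - (Y i : ℂ)) ^ 2
        = ∑ i, c i ^ 2 - 2 * ∑ i, c i * (Y i : ℂ) + ∑ i, ((Y i : ℝ) : ℂ) ^ 2 := by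
      rw [Finset.mul_sum, ← Finset.sum_sub_distrib, ← Finset.sum_add_distrib]
      exact Finset.sum_congr rfl fun i _ => by ring
    have hlin : ∑ i, (2 * B * c i) * (Y i : ℂ) = 2 * B * ∑ i, c i * (Y i : ℂ) := by
      rw [Finset.mul_sum]
      exact Finset.sum_congr rfl fun i _ => by ring
    rw [hdiv, hsplit, hlin, hC0]
    ring
  set g : EuclideanSpace ℝ (Fin d) → ℂ := fun Y =>
    Complex.exp (-B * ∑ i, ((Y i : ℝ) : ℂ) ^ 2 + ∑ i, (2 * B * c i) * (Y i : ℂ)) with hg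
  have step1 : (∫ y : ↥((ℝ ∙ ω)ᗮ),
      Complex.exp (-Real.pi *
        (∑ j, (z j - ((t • ω + (y : EuclideanSpace ℝ (Fin n))) j : ℝ)) ^ 2) / h))
      = Complex.exp C0 * ∫ y : ↥((ℝ ∙ ω)ᗮ), g (b.repr y) := by
    rw [← MeasureTheory.integral_const_mul]
    refine integral_congr_ae (Filter.Eventually.of_forall fun y => ?_)
    dsimp only
    rw [key y, scalar (fun i => b.repr y i), Complex.exp_add, hg]
  have step2 : ∫ y : ↥((ℝ ∙ ω)ᗮ), g (b.repr y) = ∫ Y : EuclideanSpace ℝ (Fin d), g Y :=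
    b.measurePreserving_repr.integral_comp b.repr.toHomeomorph.measurableEmbedding g
  have step3 : ∫ Y : EuclideanSpace ℝ (Fin d), g Y
      = ∫ v : Fin d → ℝ, Complex.exp (-B * ∑ i, ((v i : ℝ) : ℂ) ^ 2
          + ∑ i, (2 * B * c i) * (v i : ℂ)) := by
    rw [← (MeasurePreserving.symm _
      (EuclideanSpace.volume_preserving_symm_measurableEquiv_toLp (Fin d))).integral_comp
      (MeasurableEquiv.measurableEmbedding _) g]
    rfl
  have step4 := GaussianFourier.integral_cexp_neg_mul_sum_add hB0 (fun i => 2 * B * c i)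
  have hπ0 : (Real.pi : ℂ) ≠ 0 := Complex.ofReal_ne_zero.mpr Real.pi_ne_zero
  have hπB : (Real.pi : ℂ) / B = (h : ℂ) := by
    rw [hB]; push_cast; field_simp
  have hcard : ((Fintype.card (Fin d) : ℂ) / 2) = ((d : ℂ) / 2) := by
    rw [Fintype.card_fin]
  have hnd : ((n : ℝ) - 1) = (d : ℝ) := by
    rw [hdn, Nat.cast_sub (by omega : 1 ≤ n)]
    norm_num
  have hpow : ((h : ℂ)) ^ ((Fintype.card (Fin d) : ℂ) / 2)
      = ((h ^ (((n : ℝ) - 1) / 2) : ℝ) : ℂ) := by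
    have hexponent : ((d : ℂ) / 2) = ((((n : ℝ) - 1) / 2 : ℝ) : ℂ) := by
      rw [hnd]; push_cast; ring
    rw [hcard, hexponent, ← Complex.ofReal_cpow hh.le]
  have hquad : (∑ i, (2 * B * c i) ^ 2) / (4 * B) = B * ∑ i, c i ^ 2 := by
    have : ∑ i, (2 * B * c i) ^ 2 = 4 * B ^ 2 * ∑ i, c i ^ 2 := by
      rw [Finset.mul_sum]
      exact Finset.sum_congr rfl fun i _ => by ring
    rw [this]
    field_simp
  rw [step1, step2, step3, step4, hπB, hquad, hpow]
  rw [mul_comm (Complex.exp C0), mul_assoc, ← Complex.exp_add, hC0]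
  congr 2
  rw [hdiv]
  ring
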